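/- For all positive integers L₁ and L₂, one has Σ_{l=1}^{min(L₁,L₂)} 2l · binom(2L₁, L₁−l) · binom(2L₂, L₂−l) = α(2L₁)·α(2L₂)/(L₁+L₂), where α(2L) = (2L)!/(L!·(L−1)!). (This is the hypergeometric identity by which the decomposition of annular maps along the two extremal minimal separating cycles recovers the formula G_{L₁,L₂} = α(2L₁)α(2L₂)R^{L₁+L₂}/(L₁+L₂), in the bipartite case.) -/

import Mathlib

private lemma choose_step (L i : ℕ) (h : i + 1 ≤ L) :
    Nat.choose (2*L) (L - i) * (L - i) = Nat.choose (2*L) (L - (i+1)) * (L + i + 1) := by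
  have h1 : L - (i+1) + 1 = L - i := by omega
  have h2 : 2*L - (L-(i+1)) = L + i + 1 := by omega
  have := Nat.choose_succ_right_eq (2*L) (L - (i+1))
  rw [h1, h2] at this
  exact this

private lemma alpha_eq (L : ℕ) (h : 1 ≤ L) :
    ((Nat.factorial (2 * L) : ℚ) / ((Nat.factorial L : ℚ) * (Nat.factorial (L - 1) : ℚ)))
      = (L : ℚ) * (Nat.choose (2 * L) L : ℚ) := by
  have h2 : 2*L - L = L := by omega
  have key : (Nat.choose (2*L) L : ℚ) * (Nat.factorial L : ℚ) * (Nat.factorial L : ℚ)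
      = (Nat.factorial (2*L) : ℚ) := by
    have := Nat.choose_mul_factorial_mul_factorial (show L ≤ 2*L by omega)
    rw [h2] at this
    exact_mod_cast this
  have hL : L = (L - 1) + 1 := by omega
  have hfac : (Nat.factorial L : ℚ) = (L : ℚ) * (Nat.factorial (L-1) : ℚ) := by
    conv_lhs => rw [hL, Nat.factorial_succ, ← hL]
    push_cast
    ring
  rw [← key, hfac]
  have hne : (Nat.factorial (L-1) : ℚ) ≠ 0 := by positivity
  have hLne : (L : ℚ) ≠ 0 := by positivity
  field_simp

/-- For all positive integers `L₁, L₂`,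
`Σ_{l=1}^{min(L₁,L₂)} 2l · C(2L₁, L₁−l) · C(2L₂, L₂−l) = α(2L₁) α(2L₂) / (L₁+L₂)`,
where `α(2L) = (2L)! / (L! (L−1)!)`. -/
theorem annular_hypergeometric_identity_bipartite (L₁ L₂ : ℕ) (h₁ : 1 ≤ L₁) (h₂ : 1 ≤ L₂) :
    (∑ l ∈ Finset.Icc 1 (min L₁ L₂),
        (2 * l : ℚ) * (Nat.choose (2 * L₁) (L₁ - l) : ℚ) * (Nat.choose (2 * L₂) (L₂ - l) : ℚ))
      = ((Nat.factorial (2 * L₁) : ℚ) / ((Nat.factorial L₁ : ℚ) * (Nat.factorial (L₁ - 1) : ℚ)))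
        * ((Nat.factorial (2 * L₂) : ℚ) / ((Nat.factorial L₂ : ℚ) * (Nat.factorial (L₂ - 1) : ℚ)))
        / ((L₁ : ℚ) + (L₂ : ℚ)) := by
  set N := min L₁ L₂ with hN
  have hN1 : N ≤ L₁ := min_le_left _ _
  have hN2 : N ≤ L₂ := min_le_right _ _
  have hden : ((L₁ : ℚ) + (L₂ : ℚ)) ≠ 0 := by positivity
  set g : ℕ → ℚ := fun k =>
    ((L₁ - k : ℕ) : ℚ) * ((L₂ - k : ℕ) : ℚ) / ((L₁:ℚ) + L₂)
      * (Nat.choose (2*L₁) (L₁ - k) : ℚ) * (Nat.choose (2*L₂) (L₂ - k) : ℚ) with hg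
  have key : ∀ i, i + 1 ≤ N →
      g i - g (i+1) = (2 * ((i:ℚ)+1)) * (Nat.choose (2*L₁) (L₁-(i+1)) : ℚ)
        * (Nat.choose (2*L₂) (L₂-(i+1)) : ℚ) := by
    intro i hi
    have hi1 : i + 1 ≤ L₁ := le_trans hi hN1
    have hi2 : i + 1 ≤ L₂ := le_trans hi hN2
    have s1 := choose_step L₁ i hi1
    have s2 := choose_step L₂ i hi2
    have c1 : (Nat.choose (2*L₁) (L₁-i) : ℚ) * ((L₁ - i : ℕ) : ℚ)
        = (Nat.choose (2*L₁) (L₁-(i+1)) : ℚ) * ((L₁:ℚ) + i + 1) := by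
      exact_mod_cast congrArg (Nat.cast : ℕ → ℚ) s1
    have c2 : (Nat.choose (2*L₂) (L₂-i) : ℚ) * ((L₂ - i : ℕ) : ℚ)
        = (Nat.choose (2*L₂) (L₂-(i+1)) : ℚ) * ((L₂:ℚ) + i + 1) := by
      exact_mod_cast congrArg (Nat.cast : ℕ → ℚ) s2
    have e1 : ((L₁ - (i+1) : ℕ) : ℚ) = (L₁:ℚ) - ((i:ℚ)+1) := by
      rw [Nat.cast_sub hi1]; push_cast; ring
    have e2 : ((L₂ - (i+1) : ℕ) : ℚ) = (L₂:ℚ) - ((i:ℚ)+1) := by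
      rw [Nat.cast_sub hi2]; push_cast; ring
    rw [hg]
    simp only []
    rw [div_mul_eq_mul_div, div_mul_eq_mul_div, div_mul_eq_mul_div, div_mul_eq_mul_div,
      div_sub_div_same, div_eq_iff hden]
    have lhs1 : ((L₁ - i : ℕ) : ℚ) * ((L₂ - i : ℕ) : ℚ) * (Nat.choose (2*L₁) (L₁-i) : ℚ)
        * (Nat.choose (2*L₂) (L₂-i) : ℚ)
        = ((Nat.choose (2*L₁) (L₁-i) : ℚ) * ((L₁ - i : ℕ) : ℚ))
          * ((Nat.choose (2*L₂) (L₂-i) : ℚ) * ((L₂ - i : ℕ) : ℚ)) := by ring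
    rw [lhs1, c1, c2, e1, e2]
    ring
  have hconv : (∑ l ∈ Finset.Icc 1 N,
        (2 * l : ℚ) * (Nat.choose (2 * L₁) (L₁ - l) : ℚ) * (Nat.choose (2 * L₂) (L₂ - l) : ℚ))
      = ∑ i ∈ Finset.range N, (g i - g (i+1)) := by
    rw [← Finset.Ico_add_one_right_eq_Icc, Finset.sum_Ico_eq_sum_range]
    have hNN : N + 1 - 1 = N := by omega
    rw [hNN]
    apply Finset.sum_congr rfl
    intro i hi
    rw [Finset.mem_range] at hi
    rw [key i (by omega)]
    have h1i : 1 + i = i + 1 := by ring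
    rw [h1i]
    push_cast
    ring
  rw [hconv, Finset.sum_range_sub' g]
  have hgN : g N = 0 := by
    rw [hg]
    simp only []
    have : L₁ - N = 0 ∨ L₂ - N = 0 := by omega
    rcases this with h | h
    · rw [h]; simp
    · rw [h]; simp
  rw [hgN, sub_zero, hg]
  simp only [Nat.sub_zero]
  rw [alpha_eq L₁ h₁, alpha_eq L₂ h₂]
  field_simp
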